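/- For every ideal I of R_S, the Newton polyhedron of I equals the Newton polyhedron of its integral closure: Γ₊(I) = Γ₊(Ī). -/

import Mathlib

open scoped BigOperators

noncomputable section

namespace ToricNewton

/-- The submonoid `S ⊆ ℤⁿ` generated by `b₁, …, b_r`. -/
def Sgroup {n r : ℕ} (b : Fin r → Fin n → ℤ) : AddSubmonoid (Fin n → ℤ) :=
  AddSubmonoid.closure (Set.range b)

/-- View an exponent `d ∈ ℕⁿ` as a point of `ℤⁿ`. -/
def expToZ {n : ℕ} (d : Fin n →₀ ℕ) : Fin n → ℤ := fun i => (d i : ℤ)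

lemma expToZ_zero {n : ℕ} : expToZ (0 : Fin n →₀ ℕ) = 0 := by
  funext i; simp [expToZ]

lemma expToZ_add {n : ℕ} (d e : Fin n →₀ ℕ) : expToZ (d + e) = expToZ d + expToZ e := by
  funext i; simp [expToZ]

/-- `R_S`: the subalgebra of `ℂ[[x₁,…,xₙ]]` of series with support in `S`;
this is the algebraic model of the local ring `𝒪_{X(S)}` at the origin. -/
def RS {n r : ℕ} (b : Fin r → Fin n → ℤ) : Subalgebra ℂ (MvPowerSeries (Fin n) ℂ) where
  carrier := { f | ∀ d : Fin n →₀ ℕ, MvPowerSeries.coeff d f ≠ 0 → expToZ d ∈ Sgroup b }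
  add_mem' := by
    intro f g hf hg d hd
    rw [Set.mem_setOf_eq] at hf hg
    rw [map_add] at hd
    by_cases h1 : MvPowerSeries.coeff d f ≠ 0
    · exact hf d h1
    · push_neg at h1
      exact hg d (by simpa [h1] using hd)
  zero_mem' := by intro d hd; simp at hd
  one_mem' := by
    intro d hd
    rw [MvPowerSeries.coeff_one] at hd
    split_ifs at hd with h
    · subst h; simpa [expToZ_zero] using (Sgroup b).zero_mem
    · exact absurd rfl hd
  mul_mem' := by
    intro f g hf hg d hd
    rw [Set.mem_setOf_eq] at hf hg
    rw [MvPowerSeries.coeff_mul] at hd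
    obtain ⟨p, hp, hne⟩ := Finset.exists_ne_zero_of_sum_ne_zero hd
    rw [Finset.HasAntidiagonal.mem_antidiagonal] at hp
    have h1 : MvPowerSeries.coeff p.1 f ≠ 0 := left_ne_zero_of_mul hne
    have h2 : MvPowerSeries.coeff p.2 g ≠ 0 := right_ne_zero_of_mul hne
    have := (Sgroup b).add_mem (hf _ h1) (hg _ h2)
    rwa [← expToZ_add, hp] at this
  algebraMap_mem' := by
    intro c d hd
    rw [MvPowerSeries.algebraMap_apply, MvPowerSeries.coeff_C] at hd
    split_ifs at hd with h
    · subst h; simpa [expToZ_zero] using (Sgroup b).zero_mem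
    · exact absurd rfl hd

/-- The exponent in `ℕⁿ` associated to `s ∈ ℤⁿ` (with nonnegative entries). -/
def natExp {n : ℕ} (s : Fin n → ℤ) : Fin n →₀ ℕ :=
  Finsupp.equivFunOnFinite.symm fun i => (s i).toNat

/-- The monomial power series `x^s` with coefficient `1`. -/
def monomialZ {n : ℕ} (s : Fin n → ℤ) : MvPowerSeries (Fin n) ℂ :=
  MvPowerSeries.monomial (natExp s) 1

/-- View a lattice point as a point of `ℝⁿ`. -/
def toReal {n : ℕ} (k : Fin n → ℤ) : Fin n → ℝ := fun i => (k i : ℝ)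

/-- The standard pairing on `ℝⁿ`. -/
def dotR {n : ℕ} (x v : Fin n → ℝ) : ℝ := ∑ i, x i * v i

/-- The cone of `S`, i.e. nonnegative real combinations of `b₁, …, b_r`. -/
def coneS {n r : ℕ} (b : Fin r → Fin n → ℤ) : Set (Fin n → ℝ) :=
  { x | ∃ lam : Fin r → ℝ, (∀ i, 0 ≤ lam i) ∧ x = ∑ i, lam i • toReal (b i) }

/-- The dual cone of `cone(S)`. -/
def dualConeS {n r : ℕ} (b : Fin r → Fin n → ℤ) : Set (Fin n → ℝ) :=
  { u | ∀ v ∈ coneS b, 0 ≤ dotR u v }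

/-- The Newton polyhedron `Γ₊(A)` of `A ⊆ S`: the convex hull of
`{k + v : k ∈ A, v ∈ cone(S)}`. -/
def NewtonPoly {n r : ℕ} (b : Fin r → Fin n → ℤ) (A : Set (Fin n → ℤ)) :
    Set (Fin n → ℝ) :=
  convexHull ℝ { x | ∃ k ∈ A, ∃ v ∈ coneS b, x = toReal k + v }

/-- `ℓ(v, P) = inf {⟨k, v⟩ : k ∈ P}`. -/
def ellP {n : ℕ} (P : Set (Fin n → ℝ)) (v : Fin n → ℝ) : ℝ :=
  sInf ((fun k => dotR k v) '' P)

/-- `Δ(v, P) = {k ∈ P : ⟨k, v⟩ = ℓ(v, P)}`. -/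
def faceP {n : ℕ} (P : Set (Fin n → ℝ)) (v : Fin n → ℝ) : Set (Fin n → ℝ) :=
  { k ∈ P | dotR k v = ellP P v }

/-- The support of a power series, as a subset of `ℤⁿ`. -/
def suppZ {n : ℕ} (g : MvPowerSeries (Fin n) ℂ) : Set (Fin n → ℤ) :=
  { s | ∃ d : Fin n →₀ ℕ, MvPowerSeries.coeff d g ≠ 0 ∧ s = expToZ d }

/-- The Newton polyhedron `Γ₊(I)` of an ideal `I ⊆ R_S`. -/
def NewtonIdeal {n r : ℕ} (b : Fin r → Fin n → ℤ) (I : Ideal ↥(RS b)) :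
    Set (Fin n → ℝ) :=
  NewtonPoly b (⋃ g ∈ (I : Set ↥(RS b)), suppZ (g : MvPowerSeries (Fin n) ℂ))

/-- `h` is integral over the ideal `I`:
`h^m + a₁ h^(m-1) + ⋯ + a_m = 0` with `aᵢ ∈ Iⁱ`. -/
def IsIntegralOverIdeal {R : Type*} [CommRing R] (I : Ideal R) (h : R) : Prop :=
  ∃ m : ℕ, 0 < m ∧ ∃ a : Fin m → R, (∀ i : Fin m, a i ∈ I ^ ((i : ℕ) + 1)) ∧
    h ^ m + ∑ i : Fin m, a i * h ^ (m - 1 - (i : ℕ)) = 0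

/-- `I°`: the ideal generated by the monomials `x^k` with `k ∈ S ∩ Γ₊(I)`. -/
def Icirc {n r : ℕ} (b : Fin r → Fin n → ℤ) (I : Ideal ↥(RS b)) : Ideal ↥(RS b) :=
  Ideal.span { m : ↥(RS b) | ∃ s : Fin n → ℤ, s ∈ Sgroup b ∧
    toReal s ∈ NewtonIdeal b I ∧ (m : MvPowerSeries (Fin n) ℂ) = monomialZ s }

/-- `C(Ī)`: the convex hull of the exponents of the monomials in the integral closure. -/
def CIbar {n r : ℕ} (b : Fin r → Fin n → ℤ) (I : Ideal ↥(RS b)) : Set (Fin n → ℝ) :=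
  convexHull ℝ (toReal '' { s : Fin n → ℤ | s ∈ Sgroup b ∧
    ∃ m : ↥(RS b), (m : MvPowerSeries (Fin n) ℂ) = monomialZ s ∧ IsIntegralOverIdeal I m })

/-- The coefficient of `g` at a lattice exponent `v`. -/
def coeffZ {n : ℕ} (g : MvPowerSeries (Fin n) ℂ) (v : Fin n → ℤ) : ℂ :=
  MvPowerSeries.coeff (natExp v) g

/-- `L(g_Δ)` evaluated at `z`: the polynomial `∑_{v ∈ supp(g) ∩ Δ} a_v z^v`. -/
def Lface {n : ℕ} (g : MvPowerSeries (Fin n) ℂ) (Δ : Set (Fin n → ℝ))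
    (z : Fin n → ℂ) : ℂ :=
  ∑ᶠ v ∈ { v : Fin n → ℤ | v ∈ suppZ g ∧ toReal v ∈ Δ },
    coeffZ g v * ∏ i, z i ^ (v i)

/-- `Δ` is a (nonempty) compact face of the polyhedron `P`. -/
def IsCompactFace {n r : ℕ} (b : Fin r → Fin n → ℤ) (P Δ : Set (Fin n → ℝ)) : Prop :=
  (∃ v ∈ dualConeS b, Δ = faceP P v) ∧ Δ.Nonempty ∧ IsCompact Δ

/-- A finite generating family of `I` is non-degenerate if on every compact face `Δ`
of `Γ₊(I)` the polynomials `L((gⱼ)_Δ)` have no common zero in the torus `(ℂ*)ⁿ`. -/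
def NondegenFamily {n r : ℕ} (b : Fin r → Fin n → ℤ) {l : ℕ}
    (g : Fin l → ↥(RS b)) (I : Ideal ↥(RS b)) : Prop :=
  ∀ Δ : Set (Fin n → ℝ), IsCompactFace b (NewtonIdeal b I) Δ →
    ¬ ∃ z : Fin n → ℂ, (∀ i, z i ≠ 0) ∧
      ∀ j, Lface (g j : MvPowerSeries (Fin n) ℂ) Δ z = 0

/-- An ideal is non-degenerate if it admits a non-degenerate finite generating family. -/
def Nondegenerate {n r : ℕ} (b : Fin r → Fin n → ℤ) (I : Ideal ↥(RS b)) : Prop :=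
  ∃ l : ℕ, ∃ g : Fin l → ↥(RS b), Ideal.span (Set.range g) = I ∧ NondegenFamily b g I

/-- The toric ideal `I_S ⊆ ℂ[x₁,…,x_r]`, generated by the binomials
`x^{α₊} - x^{α₋}` over the relations `α` of `b₁, …, b_r`. -/
def toricIdeal {n r : ℕ} (b : Fin r → Fin n → ℤ) : Ideal (MvPolynomial (Fin r) ℂ) :=
  Ideal.span { p | ∃ α : Fin r → ℤ, (∑ i, α i • b i) = 0 ∧
    p = (∏ i, MvPolynomial.X i ^ (α i).toNat) - ∏ i, MvPolynomial.X i ^ (-(α i)).toNat }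

/-- The affine toric variety `X(S) = V(I_S) ⊆ ℂ^r`. -/
def XS {n r : ℕ} (b : Fin r → Fin n → ℤ) : Set (Fin r → ℂ) :=
  { x | ∀ p ∈ toricIdeal b, MvPolynomial.eval x p = 0 }

section Aux

variable {n r : ℕ} {b : Fin r → Fin n → ℤ}

lemma mem_Sgroup_iff {s : Fin n → ℤ} :
    s ∈ Sgroup b ↔ ∃ c : Fin r → ℕ, s = ∑ i, c i • b i := by
  constructor
  · intro hs
    induction hs using AddSubmonoid.closure_induction with
    | mem x hx =>
        obtain ⟨i, rfl⟩ := hx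
        refine ⟨Pi.single i 1, ?_⟩
        simp [Pi.single_apply, ite_smul, Finset.sum_ite_eq']
    | zero => exact ⟨0, by simp⟩
    | add x y _ _ hx hy =>
        obtain ⟨c, rfl⟩ := hx; obtain ⟨c', rfl⟩ := hy
        exact ⟨c + c', by simp [add_smul, Finset.sum_add_distrib]⟩
  · rintro ⟨c, rfl⟩
    exact AddSubmonoid.sum_mem _ fun i _ =>
      AddSubmonoid.nsmul_mem _ (AddSubmonoid.subset_closure (Set.mem_range_self i)) _

lemma toReal_add (x y : Fin n → ℤ) : toReal (x + y) = toReal x + toReal y := by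
  funext i; simp [toReal]

lemma toReal_zero : toReal (0 : Fin n → ℤ) = 0 := by
  funext i; simp [toReal]

lemma toReal_nsmul (c : ℕ) (x : Fin n → ℤ) : toReal (c • x) = (c : ℝ) • toReal x := by
  funext i; simp [toReal]

lemma toReal_sum {ι : Type*} (s : Finset ι) (g : ι → Fin n → ℤ) :
    toReal (∑ i ∈ s, g i) = ∑ i ∈ s, toReal (g i) := by
  induction s using Finset.cons_induction with
  | empty => simp [toReal_zero]
  | cons a s ha ih => rw [Finset.sum_cons, Finset.sum_cons, toReal_add, ih]

lemma coneS_zero : (0 : Fin n → ℝ) ∈ coneS b :=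
  ⟨0, fun _ => le_refl 0, by simp⟩

lemma coneS_add {x y : Fin n → ℝ} (hx : x ∈ coneS b) (hy : y ∈ coneS b) :
    x + y ∈ coneS b := by
  obtain ⟨l, hl, rfl⟩ := hx; obtain ⟨m, hm, rfl⟩ := hy
  exact ⟨l + m, fun i => add_nonneg (hl i) (hm i),
    by simp [add_smul, Finset.sum_add_distrib]⟩

lemma coneS_smul {t : ℝ} (ht : 0 ≤ t) {x : Fin n → ℝ} (hx : x ∈ coneS b) :
    t • x ∈ coneS b := by
  obtain ⟨l, hl, rfl⟩ := hx
  exact ⟨fun i => t * l i, fun i => mul_nonneg ht (hl i),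
    by rw [Finset.smul_sum]; simp [smul_smul]⟩

lemma toReal_b_mem_coneS (i : Fin r) : toReal (b i) ∈ coneS b := by
  refine ⟨Pi.single i 1, fun j => ?_, ?_⟩
  · by_cases h : j = i <;> simp [Pi.single_apply, h]
  · simp [Pi.single_apply, ite_smul, Finset.sum_ite_eq']

lemma toReal_S_mem_coneS {s : Fin n → ℤ} (hs : s ∈ Sgroup b) : toReal s ∈ coneS b := by
  obtain ⟨c, rfl⟩ := mem_Sgroup_iff.mp hs
  refine ⟨fun i => (c i : ℝ), fun i => Nat.cast_nonneg _, ?_⟩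
  rw [toReal_sum]
  exact Finset.sum_congr rfl fun i _ => toReal_nsmul _ _

lemma coneS_convex : Convex ℝ (coneS b) := fun _ hx _ hy _ _ ha hc _ =>
  coneS_add (coneS_smul ha hx) (coneS_smul hc hy)

lemma NewtonPoly_mono {A B : Set (Fin n → ℤ)} (hAB : A ⊆ B) :
    NewtonPoly b A ⊆ NewtonPoly b B :=
  convexHull_mono fun x hx => by
    obtain ⟨k, hk, v, hv, rfl⟩ := hx
    exact ⟨k, hAB hk, v, hv, rfl⟩

lemma mem_NewtonPoly_of_mem {A : Set (Fin n → ℤ)} {k : Fin n → ℤ} (hk : k ∈ A) :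
    toReal k ∈ NewtonPoly b A :=
  subset_convexHull _ _ ⟨k, hk, 0, coneS_zero, (add_zero _).symm⟩

lemma NewtonPoly_add_cone {A : Set (Fin n → ℤ)} {p v : Fin n → ℝ}
    (hp : p ∈ NewtonPoly b A) (hv : v ∈ coneS b) : p + v ∈ NewtonPoly b A := by
  classical
  have himg := AffineMap.image_convexHull
    (s := { x | ∃ k ∈ A, ∃ w ∈ coneS b, x = toReal k + w })
    (f := (AffineEquiv.constVAdd ℝ (Fin n → ℝ) v).toAffineMap)
  have hmem : v + p ∈ (AffineEquiv.constVAdd ℝ (Fin n → ℝ) v).toAffineMap ''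
      convexHull ℝ { x | ∃ k ∈ A, ∃ w ∈ coneS b, x = toReal k + w } :=
    ⟨p, hp, rfl⟩
  rw [himg] at hmem
  have hsub : (AffineEquiv.constVAdd ℝ (Fin n → ℝ) v).toAffineMap ''
      { x | ∃ k ∈ A, ∃ w ∈ coneS b, x = toReal k + w } ⊆
      { x | ∃ k ∈ A, ∃ w ∈ coneS b, x = toReal k + w } := by
    rintro _ ⟨x, ⟨k, hk, w, hw, rfl⟩, rfl⟩
    exact ⟨k, hk, w + v, coneS_add hw hv, by
      show v +ᵥ (toReal k + w) = _
      simp only [vadd_eq_add]; abel⟩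
  have hfin := convexHull_mono hsub hmem
  rw [add_comm]
  exact hfin

end Aux
/-- The weight of an exponent w.r.t. a linear functional. -/
def wt {n : ℕ} (f : (Fin n → ℝ) →L[ℝ] ℝ) (d : Fin n →₀ ℕ) : ℝ := f (toReal (expToZ d))

lemma wt_add {n : ℕ} (f : (Fin n → ℝ) →L[ℝ] ℝ) (d e : Fin n →₀ ℕ) :
    wt f (d + e) = wt f d + wt f e := by
  unfold wt; rw [expToZ_add, toReal_add, map_add]

lemma wt_zero {n : ℕ} (f : (Fin n → ℝ) →L[ℝ] ℝ) : wt f (0 : Fin n →₀ ℕ) = 0 := by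
  unfold wt; rw [expToZ_zero, toReal_zero, map_zero]

/-- All coefficients of `p` live in weight `≥ α`. -/
def WgeP {n : ℕ} (f : (Fin n → ℝ) →L[ℝ] ℝ) (p : MvPowerSeries (Fin n) ℂ) (α : ℝ) : Prop :=
  ∀ d, MvPowerSeries.coeff d p ≠ 0 → α ≤ wt f d

/-- All coefficients of `p` live in weight `> α`. -/
def WgtP {n : ℕ} (f : (Fin n → ℝ) →L[ℝ] ℝ) (p : MvPowerSeries (Fin n) ℂ) (α : ℝ) : Prop :=
  ∀ d, MvPowerSeries.coeff d p ≠ 0 → α < wt f d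

/-- All coefficients of `p` live in weight `≤ α`. -/
def WleP {n : ℕ} (f : (Fin n → ℝ) →L[ℝ] ℝ) (p : MvPowerSeries (Fin n) ℂ) (α : ℝ) : Prop :=
  ∀ d, MvPowerSeries.coeff d p ≠ 0 → wt f d ≤ α

lemma WgtP.toWge {n : ℕ} {f : (Fin n → ℝ) →L[ℝ] ℝ} {p : MvPowerSeries (Fin n) ℂ} {α : ℝ}
    (h : WgtP f p α) : WgeP f p α := fun d hd => (h d hd).le

section MulLemmas
variable {n : ℕ} {f : (Fin n → ℝ) →L[ℝ] ℝ} {p q : MvPowerSeries (Fin n) ℂ} {α β : ℝ}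

private lemma wt_split {d : Fin n →₀ ℕ} (hd : MvPowerSeries.coeff d (p * q) ≠ 0) :
    ∃ d₁ d₂, MvPowerSeries.coeff d₁ p ≠ 0 ∧ MvPowerSeries.coeff d₂ q ≠ 0 ∧
      wt f d = wt f d₁ + wt f d₂ := by
  rw [MvPowerSeries.coeff_mul] at hd
  obtain ⟨e, he, hne⟩ := Finset.exists_ne_zero_of_sum_ne_zero hd
  rw [Finset.HasAntidiagonal.mem_antidiagonal] at he
  exact ⟨e.1, e.2, left_ne_zero_of_mul hne, right_ne_zero_of_mul hne,
    by rw [← he, wt_add]⟩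

lemma WgeP_mul (hp : WgeP f p α) (hq : WgeP f q β) : WgeP f (p * q) (α + β) := by
  intro d hd
  obtain ⟨d₁, d₂, h1, h2, heq⟩ := wt_split hd
  have := hp d₁ h1; have := hq d₂ h2; linarith

lemma WgtP_mul_ge (hp : WgtP f p α) (hq : WgeP f q β) : WgtP f (p * q) (α + β) := by
  intro d hd
  obtain ⟨d₁, d₂, h1, h2, heq⟩ := wt_split hd
  have := hp d₁ h1; have := hq d₂ h2; linarith

lemma WgeP_mul_gt (hp : WgeP f p α) (hq : WgtP f q β) : WgtP f (p * q) (α + β) := by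
  intro d hd
  obtain ⟨d₁, d₂, h1, h2, heq⟩ := wt_split hd
  have := hp d₁ h1; have := hq d₂ h2; linarith

lemma WleP_mul (hp : WleP f p α) (hq : WleP f q β) : WleP f (p * q) (α + β) := by
  intro d hd
  obtain ⟨d₁, d₂, h1, h2, heq⟩ := wt_split hd
  have := hp d₁ h1; have := hq d₂ h2; linarith

lemma WgeP_one : WgeP f (1 : MvPowerSeries (Fin n) ℂ) 0 := by
  intro d hd
  rw [MvPowerSeries.coeff_one] at hd
  split_ifs at hd with h
  · subst h; rw [wt_zero]
  · exact absurd rfl hd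

lemma WleP_one : WleP f (1 : MvPowerSeries (Fin n) ℂ) 0 := by
  intro d hd
  rw [MvPowerSeries.coeff_one] at hd
  split_ifs at hd with h
  · subst h; rw [wt_zero]
  · exact absurd rfl hd

lemma WgeP_natCast (c : ℕ) : WgeP f (c : MvPowerSeries (Fin n) ℂ) 0 := by
  intro d hd
  have hc : (c : MvPowerSeries (Fin n) ℂ) = MvPowerSeries.C (c : ℂ) :=
    (map_natCast (MvPowerSeries.C) c).symm
  rw [hc, MvPowerSeries.coeff_C] at hd
  split_ifs at hd with h
  · subst h; rw [wt_zero]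
  · exact absurd rfl hd

lemma WgeP_pow (hp : WgeP f p α) (m : ℕ) : WgeP f (p ^ m) (m * α) := by
  induction m with
  | zero => simpa using (WgeP_one (f := f))
  | succ k ih =>
      rw [pow_succ]
      have := WgeP_mul ih hp
      convert this using 1
      push_cast; ring

lemma WleP_pow (hp : WleP f p α) (m : ℕ) : WleP f (p ^ m) (m * α) := by
  induction m with
  | zero => simpa using (WleP_one (f := f))
  | succ k ih =>
      rw [pow_succ]
      have := WleP_mul ih hp
      convert this using 1
      push_cast; ring

lemma WgtP_pow (hp : WgtP f p α) {m : ℕ} (hm : 1 ≤ m) : WgtP f (p ^ m) (m * α) := by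
  obtain ⟨k, rfl⟩ : ∃ k, m = k + 1 := ⟨m - 1, by omega⟩
  rw [pow_succ]
  have := WgeP_mul_gt (WgeP_pow hp.toWge k) hp
  convert this using 1
  push_cast; ring

lemma WgtP_add (hp : WgtP f p α) (hq : WgtP f q α) : WgtP f (p + q) α := by
  intro d hd
  rw [map_add] at hd
  by_cases h : MvPowerSeries.coeff d p ≠ 0
  · exact hp d h
  · push_neg at h
    exact hq d (by simpa [h] using hd)

end MulLemmas

set_option synthInstance.maxHeartbeats 1000000 in
set_option maxHeartbeats 1000000 in
/-- Elements of `I ^ j` have all their weights `> j * u` when elements of `I` have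
weights `> u`. -/
lemma wgtP_of_mem_pow {n r : ℕ} {b : Fin r → Fin n → ℤ} {f : (Fin n → ℝ) →L[ℝ] ℝ}
    {I : Ideal ↥(RS b)} {u : ℝ}
    (hI : ∀ g ∈ I, WgtP f (g : MvPowerSeries (Fin n) ℂ) u) :
    ∀ j : ℕ, 1 ≤ j → ∀ a : ↥(RS b), a ∈ I ^ j → WgtP f (a : MvPowerSeries (Fin n) ℂ) (j * u) := by
  intro j hj
  induction j, hj using Nat.le_induction with
  | base =>
      intro a ha
      rw [pow_one] at ha
      simpa using hI a ha
  | succ k hk ih =>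
      intro a ha
      rw [pow_succ] at ha
      refine Submodule.mul_induction_on ha ?_ ?_
      · intro x hx y hy
        have := WgtP_mul_ge (ih x hx) (hI y hy).toWge
        have hcoe : ((x * y : ↥(RS b)) : MvPowerSeries (Fin n) ℂ) =
            (x : MvPowerSeries (Fin n) ℂ) * (y : MvPowerSeries (Fin n) ℂ) := rfl
        rw [hcoe]
        convert this using 1
        push_cast; ring
      · intro x y hx hy
        have hcoe : ((x + y : ↥(RS b)) : MvPowerSeries (Fin n) ℂ) =
            (x : MvPowerSeries (Fin n) ℂ) + (y : MvPowerSeries (Fin n) ℂ) := rfl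
        rw [hcoe] at *
        exact WgtP_add hx hy
/-- The minimum weight over the support of a nonzero element of `R_S` is attained. -/
lemma exists_min_wt {n r : ℕ} {b : Fin r → Fin n → ℤ} (f : (Fin n → ℝ) →L[ℝ] ℝ)
    (hβ : ∀ i, 0 ≤ f (toReal (b i))) (h : ↥(RS b))
    (hne : (h : MvPowerSeries (Fin n) ℂ) ≠ 0) :
    ∃ d₀, MvPowerSeries.coeff d₀ (h : MvPowerSeries (Fin n) ℂ) ≠ 0 ∧
      ∀ d, MvPowerSeries.coeff d (h : MvPowerSeries (Fin n) ℂ) ≠ 0 → wt f d₀ ≤ wt f d := by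
  classical
  set β : Fin r → ℝ := fun i => f (toReal (b i)) with hβdef
  -- every support weight is a nonnegative combination of the β i
  have hrep : ∀ d, MvPowerSeries.coeff d (h : MvPowerSeries (Fin n) ℂ) ≠ 0 →
      ∃ c : Fin r → ℕ, wt f d = ∑ i, (c i : ℝ) * β i := by
    intro d hd
    obtain ⟨c, hc⟩ := mem_Sgroup_iff.mp (h.2 d hd)
    refine ⟨c, ?_⟩
    unfold wt
    rw [hc, toReal_sum, map_sum]
    refine Finset.sum_congr rfl fun i _ => ?_
    rw [toReal_nsmul, map_smul, smul_eq_mul]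
  set Vall : Set ℝ := {x | ∃ c : Fin r → ℕ, x = ∑ i, (c i : ℝ) * β i} with hV
  have hVnonneg : ∀ x ∈ Vall, 0 ≤ x := by
    rintro x ⟨c, rfl⟩
    exact Finset.sum_nonneg fun i _ => mul_nonneg (Nat.cast_nonneg _) (hβ i)
  -- get one support exponent
  have : ∃ d, MvPowerSeries.coeff d (h : MvPowerSeries (Fin n) ℂ) ≠ 0 := by
    by_contra hcon
    push_neg at hcon
    exact hne (MvPowerSeries.ext fun d => by simpa using hcon d)
  obtain ⟨d₁, hd₁⟩ := this
  set B := wt f d₁ with hB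
  have hBV : B ∈ Vall := by obtain ⟨c, hc⟩ := hrep d₁ hd₁; exact ⟨c, hc⟩
  have hB0 : 0 ≤ B := hVnonneg _ hBV
  -- local finiteness of the value set
  have hfin : (Vall ∩ Set.Icc 0 B).Finite := by
    set N : ℕ := Finset.univ.sup fun i => ⌈B / β i⌉₊ with hN
    have hsub : Vall ∩ Set.Icc 0 B ⊆
        (fun c : Fin r → ℕ => ∑ i, (c i : ℝ) * β i) '' {c | ∀ i, c i ≤ N} := by
      rintro x ⟨⟨c, rfl⟩, hx0, hxB⟩
      refine ⟨fun i => if 0 < β i then c i else 0, fun i => ?_, ?_⟩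
      · by_cases hpos : 0 < β i
        · simp only [if_pos hpos]
          have hterm : (c i : ℝ) * β i ≤ ∑ j, (c j : ℝ) * β j :=
            Finset.single_le_sum (f := fun j => (c j : ℝ) * β j)
              (fun j _ => mul_nonneg (Nat.cast_nonneg _) (hβ j)) (Finset.mem_univ i)
          have hle : (c i : ℝ) ≤ B / β i := by
            rw [le_div_iff₀ hpos]; linarith
          have : (c i : ℝ) ≤ (⌈B / β i⌉₊ : ℝ) := hle.trans (Nat.le_ceil _)
          exact le_trans (Nat.cast_le.mp this) (Finset.le_sup (f := fun i => ⌈B / β i⌉₊) (Finset.mem_univ i))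
        · simp only [if_neg hpos]; exact Nat.zero_le _
      · refine Finset.sum_congr rfl fun i _ => ?_
        by_cases hpos : 0 < β i
        · simp [if_pos hpos]
        · have : β i = 0 := le_antisymm (not_lt.mp hpos) (hβ i)
          simp [this]
    have hfinc : ({c : Fin r → ℕ | ∀ i, c i ≤ N}).Finite := by
      have : {c : Fin r → ℕ | ∀ i, c i ≤ N} ⊆ Set.pi Set.univ fun _ => Set.Iic N := by
        intro c hc i _; exact hc i
      exact (Set.Finite.pi fun _ => Set.finite_Iic N).subset this
    exact (hfinc.image _).subset hsub
  -- minimize over the (finite) relevant part of the weight set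
  set T : Set ℝ :=
    {x | ∃ d, MvPowerSeries.coeff d (h : MvPowerSeries (Fin n) ℂ) ≠ 0 ∧ wt f d = x} with hT
  have hTV : T ⊆ Vall := by rintro x ⟨d, hd, rfl⟩; obtain ⟨c, hc⟩ := hrep d hd; exact ⟨c, hc⟩
  have hT'fin : (T ∩ Set.Icc 0 B).Finite :=
    hfin.subset (Set.inter_subset_inter_left _ hTV)
  have hT'ne : (T ∩ Set.Icc 0 B).Nonempty :=
    ⟨B, ⟨d₁, hd₁, rfl⟩, hB0, le_refl B⟩
  obtain ⟨x₀, hx₀mem, hx₀min⟩ := Set.exists_min_image _ id hT'fin hT'ne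
  obtain ⟨⟨d₀, hd₀, hwt₀⟩, hx₀0, hx₀B⟩ := hx₀mem
  refine ⟨d₀, hd₀, fun d hd => ?_⟩
  have hdT : wt f d ∈ T := ⟨d, hd, rfl⟩
  have hd0 : 0 ≤ wt f d := hVnonneg _ (hTV hdT)
  by_cases hcase : wt f d ≤ B
  · have := hx₀min _ ⟨hdT, hd0, hcase⟩
    rw [hwt₀]; exact this
  · rw [hwt₀]; push_neg at hcase; linarith
section ConeClosed

variable {n r : ℕ} {b : Fin r → Fin n → ℤ}

/-- The linear map `μ ↦ ∑ μ i • v i`. -/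
def combo {α : Type*} [Fintype α] (v : α → (Fin n → ℝ)) : (α → ℝ) →ₗ[ℝ] (Fin n → ℝ) where
  toFun := fun μ => ∑ i, μ i • v i
  map_add' := by intro x y; simp [add_smul, Finset.sum_add_distrib]
  map_smul' := by intro c x; simp [Finset.smul_sum, smul_smul]

@[simp] lemma combo_apply {α : Type*} [Fintype α] (v : α → (Fin n → ℝ)) (μ : α → ℝ) :
    combo v μ = ∑ i, μ i • v i := rfl

/-- Carathéodory's theorem for finitely generated cones. -/
lemma cone_caratheodory (N : ℕ) :
    ∀ J : Finset (Fin r), J.card ≤ N → ∀ lam : Fin r → ℝ, (∀ i, 0 ≤ lam i) →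
    ∃ (K : Finset (Fin r)) (mu : Fin r → ℝ),
      K ⊆ J ∧ LinearIndependent ℝ (fun i : K => toReal (b i)) ∧ (∀ i, 0 ≤ mu i) ∧
      ∑ i ∈ K, mu i • toReal (b i) = ∑ i ∈ J, lam i • toReal (b i) := by
  classical
  induction N with
  | zero =>
      intro J hJ lam hlam
      have hJe : J = ∅ := Finset.card_eq_zero.mp (Nat.le_zero.mp hJ)
      subst hJe
      haveI : IsEmpty {x // x ∈ (∅ : Finset (Fin r))} := ⟨fun x => Finset.notMem_empty _ x.2⟩
      exact ⟨∅, lam, subset_refl _, linearIndependent_empty_type, hlam, rfl⟩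
  | succ N ih =>
      intro J hJcard lam hlam
      by_cases hind : LinearIndependent ℝ (fun i : J => toReal (b i))
      · exact ⟨J, lam, subset_refl J, hind, hlam, rfl⟩
      · obtain ⟨g, hg0, hgpos⟩ : ∃ g : {x // x ∈ J} → ℝ,
            (∑ i, g i • toReal (b i.1) = 0) ∧ ∃ i, 0 < g i := by
          rw [Fintype.linearIndependent_iff] at hind
          push_neg at hind
          obtain ⟨g, hg0, i₁, hi₁⟩ := hind
          rcases lt_or_gt_of_ne hi₁ with hneg | hpos
          · refine ⟨-g, ?_, i₁, by simpa using hneg⟩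
            simp only [Pi.neg_apply, neg_smul, Finset.sum_neg_distrib, hg0, neg_zero]
          · exact ⟨g, hg0, i₁, hpos⟩
        set gh : Fin r → ℝ := fun i => if h : i ∈ J then g ⟨i, h⟩ else 0 with hgh
        have hsum0 : ∑ i ∈ J, gh i • toReal (b i) = 0 := by
          have hattach : ∑ i ∈ J.attach, gh i.1 • toReal (b i.1) =
              ∑ i, g i • toReal (b i.1) := by
            rw [Finset.univ_eq_attach]
            exact Finset.sum_congr rfl fun i _ => by simp [hgh, dif_pos i.2]
          rw [← Finset.sum_attach J (fun i => gh i • toReal (b i)), hattach, hg0]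
        set T : Finset (Fin r) := J.filter (fun i => 0 < gh i) with hT
        have hTne : T.Nonempty := by
          obtain ⟨i, hi⟩ := hgpos
          exact ⟨i.1, Finset.mem_filter.mpr ⟨i.2, by simpa [hgh, dif_pos i.2] using hi⟩⟩
        obtain ⟨i₀, hi₀T, hi₀min⟩ := Finset.exists_min_image T (fun i => lam i / gh i) hTne
        have hi₀J : i₀ ∈ J := (Finset.mem_filter.mp hi₀T).1
        have hgi₀ : 0 < gh i₀ := (Finset.mem_filter.mp hi₀T).2
        set t : ℝ := lam i₀ / gh i₀ with htdef
        have ht0 : 0 ≤ t := div_nonneg (hlam i₀) hgi₀.le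
        set lam' : Fin r → ℝ := fun i => if i ∈ J.erase i₀ then lam i - t * gh i else 0
          with hlam'
        have hlam'0 : ∀ i, 0 ≤ lam' i := by
          intro i
          simp only [hlam']
          split_ifs with hmem
          · have hiJ : i ∈ J := Finset.mem_of_mem_erase hmem
            by_cases hpos : 0 < gh i
            · have hiT : i ∈ T := Finset.mem_filter.mpr ⟨hiJ, hpos⟩
              have hmin := hi₀min i hiT
              have hle : t * gh i ≤ lam i := by
                rw [← le_div_iff₀ hpos]; exact hmin
              linarith
            · have h1 : t * gh i ≤ 0 := mul_nonpos_of_nonneg_of_nonpos ht0 (not_lt.mp hpos)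
              have h2 := hlam i
              linarith
          · exact le_refl 0
        have hsum' : ∑ i ∈ J.erase i₀, lam' i • toReal (b i) =
            ∑ i ∈ J, lam i • toReal (b i) := by
          have h1 : ∑ i ∈ J.erase i₀, lam' i • toReal (b i) =
              ∑ i ∈ J.erase i₀, (lam i - t * gh i) • toReal (b i) :=
            Finset.sum_congr rfl fun i hi => by simp only [hlam', if_pos hi]
          have h2 : ∑ i ∈ J, (lam i - t * gh i) • toReal (b i) =
              (lam i₀ - t * gh i₀) • toReal (b i₀) +
                ∑ i ∈ J.erase i₀, (lam i - t * gh i) • toReal (b i) :=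
            (Finset.add_sum_erase J _ hi₀J).symm
          have h3 : lam i₀ - t * gh i₀ = 0 := by
            rw [htdef, div_mul_cancel₀ _ (ne_of_gt hgi₀)]; ring
          have h4 : ∑ i ∈ J, (lam i - t * gh i) • toReal (b i) =
              ∑ i ∈ J, lam i • toReal (b i) - t • ∑ i ∈ J, gh i • toReal (b i) := by
            rw [Finset.smul_sum, ← Finset.sum_sub_distrib]
            refine Finset.sum_congr rfl fun i _ => ?_
            rw [sub_smul, smul_smul]
          calc ∑ i ∈ J.erase i₀, lam' i • toReal (b i)
              = ∑ i ∈ J.erase i₀, (lam i - t * gh i) • toReal (b i) := h1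
            _ = ∑ i ∈ J, (lam i - t * gh i) • toReal (b i) := by
                rw [h2, h3, zero_smul, zero_add]
            _ = ∑ i ∈ J, lam i • toReal (b i) := by
                rw [h4, hsum0, smul_zero, sub_zero]
        have hcard : (J.erase i₀).card ≤ N := by
          have hce := Finset.card_erase_of_mem hi₀J
          have hpos : 1 ≤ J.card := Finset.card_pos.mpr ⟨i₀, hi₀J⟩
          omega
        obtain ⟨K, mu, hKsub, hKind, hmu0, hKsum⟩ := ih (J.erase i₀) hcard lam' hlam'0
        exact ⟨K, mu, hKsub.trans (Finset.erase_subset _ _), hKind, hmu0,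
          by rw [hKsum, hsum']⟩

/-- The cone over a linearly independent subfamily is closed. -/
lemma coneJ_closed (J : Finset (Fin r))
    (hJ : LinearIndependent ℝ (fun i : J => toReal (b i))) :
    IsClosed {x : Fin n → ℝ |
      ∃ mu : Fin r → ℝ, (∀ i, 0 ≤ mu i) ∧ x = ∑ i ∈ J, mu i • toReal (b i)} := by
  classical
  set L : ({x // x ∈ J} → ℝ) →ₗ[ℝ] (Fin n → ℝ) := combo (fun i : J => toReal (b i.1)) with hL
  have hset : {x : Fin n → ℝ |
      ∃ mu : Fin r → ℝ, (∀ i, 0 ≤ mu i) ∧ x = ∑ i ∈ J, mu i • toReal (b i)} =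
      L '' {μ : {x // x ∈ J} → ℝ | ∀ i, 0 ≤ μ i} := by
    ext x
    constructor
    · rintro ⟨mu, hmu, rfl⟩
      refine ⟨fun i => mu i.1, fun i => hmu i.1, ?_⟩
      simp only [hL, combo_apply]
      rw [Finset.univ_eq_attach]
      exact Finset.sum_attach J (fun i => mu i • toReal (b i))
    · rintro ⟨μ, hμ, rfl⟩
      refine ⟨fun i => if h : i ∈ J then μ ⟨i, h⟩ else 0, fun i => ?_, ?_⟩
      · show 0 ≤ if h : i ∈ J then μ ⟨i, h⟩ else 0
        split_ifs with h
        · exact hμ _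
        · exact le_refl 0
      · show L μ = ∑ i ∈ J, (if h : i ∈ J then μ ⟨i, h⟩ else 0) • toReal (b i)
        simp only [hL, combo_apply]
        rw [← Finset.sum_attach J
          (fun i => (if h : i ∈ J then μ ⟨i, h⟩ else 0) • toReal (b i)),
          Finset.univ_eq_attach]
        exact Finset.sum_congr rfl fun i _ => by rw [dif_pos i.2]
  rw [hset]
  have hker : LinearMap.ker L = ⊥ := by
    rw [LinearMap.ker_eq_bot']
    intro μ hμ
    have := Fintype.linearIndependent_iff.mp hJ μ hμ
    funext i
    exact this i
  have hemb := LinearMap.isClosedEmbedding_of_injective hker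
  have hclosed : IsClosed {μ : {x // x ∈ J} → ℝ | ∀ i, 0 ≤ μ i} := by
    have : {μ : {x // x ∈ J} → ℝ | ∀ i, 0 ≤ μ i} = ⋂ i, {μ | 0 ≤ μ i} := by
      ext μ; simp [Set.mem_iInter]
    rw [this]
    exact isClosed_iInter fun i => isClosed_le continuous_const (continuous_apply i)
  exact hemb.isClosedMap _ hclosed

/-- The cone `coneS b` is closed. -/
lemma coneS_closed : IsClosed (coneS b) := by
  classical
  have hdecomp : coneS b = ⋃ J : Finset (Fin r),
      (if LinearIndependent ℝ (fun i : J => toReal (b i)) then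
        {x : Fin n → ℝ | ∃ mu : Fin r → ℝ, (∀ i, 0 ≤ mu i) ∧
          x = ∑ i ∈ J, mu i • toReal (b i)}
      else ∅) := by
    ext x
    constructor
    · rintro ⟨lam, hlam, rfl⟩
      obtain ⟨K, mu, _, hKind, hmu0, hKsum⟩ :=
        cone_caratheodory (b := b) (Finset.univ : Finset (Fin r)).card Finset.univ
          (le_refl _) lam hlam
      refine Set.mem_iUnion.mpr ⟨K, ?_⟩
      rw [if_pos hKind]
      exact ⟨mu, hmu0, hKsum.symm⟩
    · intro hx
      obtain ⟨J, hJ⟩ := Set.mem_iUnion.mp hx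
      by_cases hind : LinearIndependent ℝ (fun i : J => toReal (b i))
      · rw [if_pos hind] at hJ
        obtain ⟨mu, hmu, rfl⟩ := hJ
        refine ⟨fun i => if i ∈ J then mu i else 0, fun i => ?_, ?_⟩
        · show 0 ≤ if i ∈ J then mu i else 0
          split_ifs with h
          · exact hmu i
          · exact le_refl 0
        · show ∑ i ∈ J, mu i • toReal (b i) =
            ∑ i, (if i ∈ J then mu i else 0) • toReal (b i)
          rw [← Finset.sum_subset (Finset.subset_univ J)
            (f := fun i => (if i ∈ J then mu i else 0) • toReal (b i))
            (fun i _ hi => by rw [if_neg hi, zero_smul])]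
          exact Finset.sum_congr rfl fun i hi => by rw [if_pos hi]
      · rw [if_neg hind] at hJ
        exact absurd hJ (Set.notMem_empty x)
  rw [hdecomp]
  refine isClosed_iUnion_of_finite fun J => ?_
  by_cases hind : LinearIndependent ℝ (fun i : J => toReal (b i))
  · rw [if_pos hind]; exact coneJ_closed J hind
  · rw [if_neg hind]; exact isClosed_empty

end ConeClosed
section NewtonClosed

open scoped Pointwise

variable {n r : ℕ} {b : Fin r → Fin n → ℤ}

/-- Dickson's lemma: a subset of `S` is covered by finitely many translates of `S`. -/
lemma exists_finite_cover {A : Set (Fin n → ℤ)}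
    (hA : A ⊆ (Sgroup b : Set (Fin n → ℤ))) :
    ∃ F : Set (Fin n → ℤ), F.Finite ∧ F ⊆ A ∧
      ∀ a ∈ A, ∃ f ∈ F, ∃ s ∈ Sgroup b, a = f + s := by
  classical
  have hrep : ∀ a : A, ∃ c : Fin r → ℕ, (a : Fin n → ℤ) = ∑ i, c i • b i :=
    fun a => mem_Sgroup_iff.mp (hA a.2)
  choose ρ hρ using hrep
  set C : Set (Fin r → ℕ) := Set.range ρ with hC
  have hCpwo : C.IsPWO :=
    (Set.IsPWO.pi (fun _ => Set.isPWO_of_wellQuasiOrderedLE (Set.univ : Set ℕ))).mono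
      (fun c _ => by simp)
  set M : Set (Fin r → ℕ) := {c ∈ C | ∀ c' ∈ C, ¬ c' < c} with hM
  have hMC : M ⊆ C := fun c hc => hc.1
  have hMfin : M.Finite := by
    refine IsAntichain.finite_of_partiallyWellOrderedOn
      (r := (· ≤ ·)) ?_ (hCpwo.mono hMC)
    intro a ha c hc hne hle
    exact hc.2 a ha.1 (lt_of_le_of_ne hle hne)
  have hcover : ∀ c ∈ C, ∃ m ∈ M, m ≤ c := by
    intro c hc
    set D : Set (Fin r → ℕ) := {c' ∈ C | c' ≤ c} with hD
    have hDwf : D.IsWF := (hCpwo.isWF).mono fun x hx => hx.1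
    have hDne : D.Nonempty := ⟨c, hc, le_refl c⟩
    refine ⟨hDwf.min hDne, ⟨(hDwf.min_mem hDne).1, ?_⟩, (hDwf.min_mem hDne).2⟩
    intro c' hc' hlt
    have hc'D : c' ∈ D := ⟨hc', hlt.le.trans (hDwf.min_mem hDne).2⟩
    exact hDwf.not_lt_min hDne hc'D hlt
  set σ : (Fin r → ℕ) → (Fin n → ℤ) := fun c => ∑ i, c i • b i with hσ
  refine ⟨σ '' M, hMfin.image σ, ?_, ?_⟩
  · rintro _ ⟨m, hm, rfl⟩
    obtain ⟨a, rfl⟩ := hMC hm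
    have hσa : σ (ρ a) = (a : Fin n → ℤ) := (hρ a).symm
    rw [hσa]
    exact a.2
  · intro a ha
    have hcC : ρ ⟨a, ha⟩ ∈ C := Set.mem_range_self _
    obtain ⟨m, hmM, hmle⟩ := hcover _ hcC
    refine ⟨σ m, Set.mem_image_of_mem σ hmM,
      σ (fun i => ρ ⟨a, ha⟩ i - m i), mem_Sgroup_iff.mpr ⟨_, rfl⟩, ?_⟩
    have hρa := hρ ⟨a, ha⟩
    have hsum : σ (ρ ⟨a, ha⟩) = σ m + σ fun i => ρ ⟨a, ha⟩ i - m i := by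
      simp only [hσ]
      rw [← Finset.sum_add_distrib]
      refine Finset.sum_congr rfl fun i _ => ?_
      have hni : ρ ⟨a, ha⟩ i = m i + (ρ ⟨a, ha⟩ i - m i) :=
        (Nat.add_sub_cancel' (hmle i)).symm
      conv_lhs => rw [hni]
      rw [add_smul]
    exact hρa.trans hsum

/-- Structure of the Newton polyhedron of a subset of `S`. -/
lemma NewtonPoly_isClosed {A : Set (Fin n → ℤ)}
    (hA : A ⊆ (Sgroup b : Set (Fin n → ℤ))) : IsClosed (NewtonPoly b A) := by
  rcases A.eq_empty_or_nonempty with rfl | hAne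
  · have : NewtonPoly b (∅ : Set (Fin n → ℤ)) = ∅ := by
      unfold NewtonPoly
      have : { x : Fin n → ℝ | ∃ k ∈ (∅ : Set (Fin n → ℤ)), ∃ v ∈ coneS b, x = toReal k + v }
          = ∅ := by
        ext x; simp
      rw [this, convexHull_empty]
    rw [this]; exact isClosed_empty
  · obtain ⟨F, hFfin, hFA, hFcov⟩ := exists_finite_cover hA
    have hstruct : NewtonPoly b A = convexHull ℝ (toReal '' F) + coneS b := by
      apply le_antisymm
      · apply convexHull_min
        · rintro x ⟨k, hk, v, hv, rfl⟩
          obtain ⟨f, hf, s, hs, rfl⟩ := hFcov k hk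
          rw [toReal_add, add_assoc]
          exact Set.add_mem_add
            (subset_convexHull _ _ (Set.mem_image_of_mem toReal hf))
            (coneS_add (toReal_S_mem_coneS hs) hv)
        · exact (convex_convexHull ℝ _).add coneS_convex
      · rintro x hx
        obtain ⟨p, hp, v, hv, rfl⟩ := Set.mem_add.mp hx
        have hpP : p ∈ NewtonPoly b A := by
          refine convexHull_mono ?_ hp
          rintro _ ⟨f, hf, rfl⟩
          exact ⟨f, hFA hf, 0, coneS_zero, (add_zero _).symm⟩
        exact NewtonPoly_add_cone hpP hv
    rw [hstruct]
    exact IsClosed.add_left_of_isCompact coneS_closed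
      ((hFfin.image toReal).isCompact_convexHull (𝕜 := ℝ))

end NewtonClosed
set_option maxHeartbeats 1000000 in
set_option synthInstance.maxHeartbeats 1000000 in
/-- Key lemma: the support of an element integral over `I` lies in `Γ₊(I)`. -/
lemma toReal_supp_integral_mem {n r : ℕ} {b : Fin r → Fin n → ℤ} {I : Ideal ↥(RS b)}
    {h : ↥(RS b)} (hint : IsIntegralOverIdeal I h) {k : Fin n → ℤ}
    (hk : k ∈ suppZ (h : MvPowerSeries (Fin n) ℂ)) :
    toReal k ∈ NewtonIdeal b I := by
  classical
  obtain ⟨m, hm, a, ha, heq⟩ := hint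
  obtain ⟨dk, hdk, rfl⟩ := hk
  set A : Set (Fin n → ℤ) :=
    ⋃ g ∈ (I : Set ↥(RS b)), suppZ (g : MvPowerSeries (Fin n) ℂ) with hAdef
  have hAS : A ⊆ (Sgroup b : Set (Fin n → ℤ)) := by
    intro s hs
    obtain ⟨g, hgI, hsg⟩ := Set.mem_iUnion₂.mp hs
    obtain ⟨d, hd, rfl⟩ := hsg
    exact g.2 d hd
  -- the coerced integral equation
  have heqc : (h : MvPowerSeries (Fin n) ℂ) ^ m +
      ∑ i : Fin m, (a i : MvPowerSeries (Fin n) ℂ) *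
        (h : MvPowerSeries (Fin n) ℂ) ^ (m - 1 - (i : ℕ)) = 0 := by
    have h0 := congrArg (fun z : ↥(RS b) => (z : MvPowerSeries (Fin n) ℂ)) heq
    push_cast at h0
    exact h0
  by_cases hAne : A.Nonempty
  · -- main case
    show toReal (expToZ dk) ∈ NewtonPoly b A
    by_contra hnot
    obtain ⟨f, u, hfk, hfP⟩ := geometric_hahn_banach_point_closed
      (convex_convexHull ℝ _) (NewtonPoly_isClosed hAS) hnot
    have hAP : ∀ s ∈ A, toReal s ∈ NewtonPoly b A := fun s hs => mem_NewtonPoly_of_mem hs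
    have hI : ∀ g ∈ I, WgtP f (g : MvPowerSeries (Fin n) ℂ) u := by
      intro g hg d hd
      have hsA : expToZ d ∈ A := Set.mem_biUnion hg ⟨d, hd, rfl⟩
      exact hfP _ (hAP _ hsA)
    have hβ : ∀ i, 0 ≤ f (toReal (b i)) := by
      intro i
      by_contra hneg
      push_neg at hneg
      obtain ⟨a₀, ha₀⟩ := hAne
      have hp₀ : toReal a₀ ∈ NewtonPoly b A := hAP _ ha₀
      have hup₀ : u < f (toReal a₀) := hfP _ hp₀
      set t : ℝ := (f (toReal a₀) - u + 1) / (-(f (toReal (b i)))) with htdef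
      have hden : 0 < -(f (toReal (b i))) := by linarith
      have ht0 : 0 ≤ t := le_of_lt (div_pos (by linarith) hden)
      have hmem : toReal a₀ + t • toReal (b i) ∈ NewtonPoly b A :=
        NewtonPoly_add_cone hp₀ (coneS_smul ht0 (toReal_b_mem_coneS i))
      have hfu := hfP _ hmem
      rw [map_add, map_smul, smul_eq_mul] at hfu
      have hX : t * (-(f (toReal (b i)))) = f (toReal a₀) - u + 1 :=
        div_mul_cancel₀ _ hden.ne'
      have hX2 : t * f (toReal (b i)) = -(f (toReal a₀) - u + 1) := by
        linear_combination -hX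
      linarith
    have hhne : (h : MvPowerSeries (Fin n) ℂ) ≠ 0 := fun h0 => hdk (by rw [h0]; simp)
    obtain ⟨d₀, hd₀, hmin⟩ := exists_min_wt f hβ h hhne
    set τ : ℝ := wt f d₀ with hτ
    have hτu : τ < u := lt_of_le_of_lt (hmin dk hdk) hfk
    have hWge : WgeP f (h : MvPowerSeries (Fin n) ℂ) τ := fun d hd => hmin d hd
    -- split off the minimal-weight part
    set h₀ : MvPowerSeries (Fin n) ℂ := fun d =>
      if wt f d = τ then MvPowerSeries.coeff d (h : MvPowerSeries (Fin n) ℂ) else 0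
      with hh₀def
    have hcoeff₀ : ∀ d, MvPowerSeries.coeff d h₀ =
        if wt f d = τ then MvPowerSeries.coeff d (h : MvPowerSeries (Fin n) ℂ) else 0 :=
      fun d => rfl
    set h₁ : MvPowerSeries (Fin n) ℂ := (h : MvPowerSeries (Fin n) ℂ) - h₀ with hh₁def
    have hsplit : (h : MvPowerSeries (Fin n) ℂ) = h₀ + h₁ := by rw [hh₁def]; ring
    have hWeq₀ge : WgeP f h₀ τ := by
      intro d hd
      rw [hcoeff₀ d] at hd
      by_cases hwd : wt f d = τ
      · exact le_of_eq hwd.symm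
      · rw [if_neg hwd] at hd; exact absurd rfl hd
    have hWeq₀le : WleP f h₀ τ := by
      intro d hd
      rw [hcoeff₀ d] at hd
      by_cases hwd : wt f d = τ
      · exact le_of_eq hwd
      · rw [if_neg hwd] at hd; exact absurd rfl hd
    have hW₁ : WgtP f h₁ τ := by
      intro d hd
      rw [hh₁def, map_sub, hcoeff₀ d] at hd
      by_cases hwd : wt f d = τ
      · rw [if_pos hwd, sub_self] at hd; exact absurd rfl hd
      · rw [if_neg hwd, sub_zero] at hd
        exact lt_of_le_of_ne (hWge d hd) (Ne.symm hwd)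
    have hh₀ne : h₀ ≠ 0 := by
      intro h0
      apply hd₀
      have h00 : MvPowerSeries.coeff d₀ h₀ = 0 := by rw [h0]; simp
      rw [hcoeff₀ d₀, if_pos hτ.symm] at h00
      exact h00
    obtain ⟨ds, hds⟩ : ∃ d, MvPowerSeries.coeff d (h₀ ^ m) ≠ 0 := by
      by_contra hcon
      push_neg at hcon
      exact pow_ne_zero m hh₀ne (MvPowerSeries.ext fun d => by simpa using hcon d)
    have hwds : wt f ds = m * τ :=
      le_antisymm (WleP_pow hWeq₀le m ds hds) (WgeP_pow hWeq₀ge m ds hds)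
    -- the coefficient of `ds` in `h ^ m` is that of `h₀ ^ m`
    have hhm : MvPowerSeries.coeff ds ((h : MvPowerSeries (Fin n) ℂ) ^ m) =
        MvPowerSeries.coeff ds (h₀ ^ m) := by
      rw [hsplit, add_pow, map_sum]
      have hzero : ∀ j ∈ Finset.range (m + 1), j ≠ m →
          MvPowerSeries.coeff ds
            (h₀ ^ j * h₁ ^ (m - j) * ((Nat.choose m j : ℕ) : MvPowerSeries (Fin n) ℂ)) = 0 := by
        intro j hj hjm
        have hjlt : j < m := by
          have := Finset.mem_range.mp hj; omega
        by_contra hne0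
        have h1 := WgtP_mul_ge
          (WgeP_mul_gt (WgeP_pow hWeq₀ge j) (WgtP_pow hW₁ (m := m - j) (by omega)))
          (WgeP_natCast (Nat.choose m j))
        have h2 := h1 ds hne0
        rw [hwds] at h2
        have hcast : ((m - j : ℕ) : ℝ) = (m : ℝ) - (j : ℝ) := by
          rw [Nat.cast_sub hjlt.le]
        rw [hcast] at h2
        nlinarith [h2]
      rw [Finset.sum_eq_single m hzero
        (fun hmm => absurd (Finset.self_mem_range_succ m) hmm)]
      simp
    -- the other terms of the equation vanish at `ds`
    have hterm : ∀ i : Fin m, MvPowerSeries.coeff ds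
        ((a i : MvPowerSeries (Fin n) ℂ) *
          (h : MvPowerSeries (Fin n) ℂ) ^ (m - 1 - (i : ℕ))) = 0 := by
      intro i
      by_contra hne0
      have hWa : WgtP f (a i : MvPowerSeries (Fin n) ℂ) ((((i : ℕ) : ℝ) + 1) * u) := by
        have hw := wgtP_of_mem_pow hI ((i : ℕ) + 1) (by omega) (a i) (ha i)
        have hcst : ((((i : ℕ) + 1 : ℕ)) : ℝ) * u = (((i : ℕ) : ℝ) + 1) * u := by
          push_cast; ring
        rw [hcst] at hw
        exact hw
      have h1 := WgtP_mul_ge hWa (WgeP_pow hWge (m - 1 - (i : ℕ)))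
      have h2 := h1 ds hne0
      rw [hwds] at h2
      have hile : (i : ℕ) < m := i.2
      have hcast : ((m - 1 - (i : ℕ) : ℕ) : ℝ) = (m : ℝ) - 1 - ((i : ℕ) : ℝ) := by
        have hnat : (m - 1 - (i : ℕ) : ℕ) = m - (1 + (i : ℕ)) := by omega
        rw [hnat, Nat.cast_sub (by omega)]
        push_cast; ring
      rw [hcast] at h2
      nlinarith [h2, hτu, mul_lt_mul_of_pos_left hτu
        (show (0 : ℝ) < ((i : ℕ) : ℝ) + 1 by positivity)]
    -- contradiction
    have hco := congrArg (MvPowerSeries.coeff ds) heqc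
    rw [map_add, map_sum, hhm] at hco
    simp only [hterm, Finset.sum_const_zero, add_zero, map_zero] at hco
    exact hds hco
  · -- A empty: then I = 0 and h = 0, contradiction with the support point
    exfalso
    have hI0 : ∀ g ∈ I, (g : MvPowerSeries (Fin n) ℂ) = 0 := by
      intro g hg
      refine MvPowerSeries.ext fun d => ?_
      by_contra hd
      rw [map_zero] at hd
      exact hAne ⟨expToZ d, Set.mem_biUnion hg ⟨d, hd, rfl⟩⟩
    have ha0 : ∀ i : Fin m, (a i : MvPowerSeries (Fin n) ℂ) = 0 := fun i =>
      hI0 _ (Ideal.pow_le_self (Nat.succ_ne_zero _) (ha i))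
    have hpow : (h : MvPowerSeries (Fin n) ℂ) ^ m = 0 := by
      have := heqc
      simp only [ha0, zero_mul, Finset.sum_const_zero, add_zero] at this
      exact this
    have hzero : (h : MvPowerSeries (Fin n) ℂ) = 0 :=
      pow_eq_zero_iff (by omega : m ≠ 0) |>.mp hpow
    exact hdk (by rw [hzero]; simp)
/-- `Γ₊(I) = Γ₊(Ī)` for every ideal `I` of `R_S`. -/
theorem newton_eq_newton_closure
    (n r : ℕ) (hn : 1 ≤ n) (hr : 1 ≤ r) (b : Fin r → Fin n → ℤ)
    (hb_ne : ∀ i, b i ≠ 0) (hb_nonneg : ∀ i j, 0 ≤ b i j)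
    (hb_gen : AddSubgroup.closure (Set.range b) = (⊤ : AddSubgroup (Fin n → ℤ)))
    (hdim : Submodule.span ℝ (coneS b) = (⊤ : Submodule ℝ (Fin n → ℝ)))
    (hstrict : ∀ x ∈ coneS b, -x ∈ coneS b → x = (0 : Fin n → ℝ))
    (I : Ideal ↥(RS b)) :
    NewtonIdeal b I =
      NewtonPoly b (⋃ h ∈ { h : ↥(RS b) | IsIntegralOverIdeal I h },
        suppZ (h : MvPowerSeries (Fin n) ℂ)) := by
  apply Set.Subset.antisymm
  · -- `Γ₊(I) ⊆ Γ₊(Ī)` since every element of `I` is integral over `I`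
    apply NewtonPoly_mono
    intro s hs
    obtain ⟨g, hgI, hsg⟩ := Set.mem_iUnion₂.mp hs
    refine Set.mem_biUnion (show IsIntegralOverIdeal I g from ?_) hsg
    refine ⟨1, one_pos, fun _ => -g, fun i => ?_, ?_⟩
    · have h0 : ((i : ℕ) + 1) = 1 := by omega
      rw [h0, pow_one]
      exact I.neg_mem hgI
    · rw [Fin.sum_univ_one]
      show g ^ 1 + -g * g ^ 0 = 0
      ring
  · -- `Γ₊(Ī) ⊆ Γ₊(I)` by the key lemma
    apply convexHull_min ?_ (convex_convexHull ℝ _)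
    rintro x ⟨k, hk, v, hv, rfl⟩
    obtain ⟨g, hgint, hkg⟩ := Set.mem_iUnion₂.mp hk
    exact NewtonPoly_add_cone (toReal_supp_integral_mem hgint hkg) hv

end ToricNewton
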